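/- The alternating group Alt(n+2) admits the presentation ⟨x_1, ..., x_n | x_i³ = 1 for all i, (x_i x_j)² = 1 for all i ≠ j⟩, where x_i is realized as the 3-cycle (i, n+1, n+2). -/

import Mathlib

open Equiv Equiv.Perm Subgroup

namespace AltPres

variable {α : Type*} [DecidableEq α]

/-- the 3-cycle `(x y z)`, mapping `x ↦ y ↦ z ↦ x`. -/
def cyc (x y z : α) : Equiv.Perm α := Equiv.swap x z * Equiv.swap x y

variable {x y z w : α}

lemma cyc_fst (hxy : x ≠ y) (hyz : y ≠ z) : cyc x y z x = y := by
  simp only [cyc, Equiv.Perm.mul_apply, Equiv.swap_apply_left]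
  exact Equiv.swap_apply_of_ne_of_ne hxy.symm hyz

lemma cyc_snd : cyc x y z y = z := by
  simp [cyc, Equiv.Perm.mul_apply, Equiv.swap_apply_right]

lemma cyc_trd (hxz : x ≠ z) (hyz : y ≠ z) : cyc x y z z = x := by
  simp only [cyc, Equiv.Perm.mul_apply]
  rw [Equiv.swap_apply_of_ne_of_ne hxz.symm hyz.symm, Equiv.swap_apply_right]

lemma cyc_other (hx : w ≠ x) (hy : w ≠ y) (hz : w ≠ z) : cyc x y z w = w := by
  simp only [cyc, Equiv.Perm.mul_apply]
  rw [Equiv.swap_apply_of_ne_of_ne hx hy, Equiv.swap_apply_of_ne_of_ne hx hz]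

lemma cyc_rotate (hxy : x ≠ y) (hxz : x ≠ z) (hyz : y ≠ z) : cyc x y z = cyc y z x := by
  ext w
  rcases eq_or_ne w x with rfl | hwx
  · rw [cyc_fst hxy hyz, cyc_trd hxy.symm hxz.symm]
  rcases eq_or_ne w y with rfl | hwy
  · rw [cyc_snd, cyc_fst hyz hxz.symm]
  rcases eq_or_ne w z with rfl | hwz
  · rw [cyc_trd hxz hyz, cyc_snd]
  · rw [cyc_other hwx hwy hwz, cyc_other hwy hwz hwx]

lemma cyc_inv : (cyc x y z)⁻¹ = cyc x z y := by
  simp [cyc, mul_inv_rev]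

lemma cyc_conj (g : Equiv.Perm α) : g * cyc x y z * g⁻¹ = cyc (g x) (g y) (g z) := by
  unfold cyc
  rw [Equiv.swap_apply_apply, Equiv.swap_apply_apply]
  group

lemma cyc_isThreeCycle (hxy : x ≠ y) (hxz : x ≠ z) (hyz : y ≠ z) [Fintype α] :
    Equiv.Perm.IsThreeCycle (cyc x y z) :=
  Equiv.Perm.isThreeCycle_swap_mul_swap_same hxz hxy (hyz.symm)

lemma cyc_cube [Fintype α] (hxy : x ≠ y) (hxz : x ≠ z) (hyz : y ≠ z) : (cyc x y z) ^ 3 = 1 := by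
  have h := (cyc_isThreeCycle hxy hxz hyz (α := α)).orderOf
  rw [← h]
  exact pow_orderOf_eq_one _

lemma cyc_pair_sq {i j p q : α} (hij : i ≠ j) (hip : i ≠ p) (hiq : i ≠ q) (hjp : j ≠ p)
    (hjq : j ≠ q) (hpq : p ≠ q) : (cyc i p q * cyc j p q) ^ 2 = 1 := by
  ext w
  simp only [sq, Equiv.Perm.mul_apply, Equiv.Perm.one_apply]
  rcases eq_or_ne w i with rfl | hwi
  · rw [cyc_other hij hip hiq, cyc_fst hip hpq, cyc_snd, cyc_trd hiq hpq]
  rcases eq_or_ne w j with rfl | hwj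
  · rw [cyc_fst hjp hpq, cyc_snd, cyc_trd hjq hpq, cyc_other hij.symm hjp hjq]
  rcases eq_or_ne w p with rfl | hwp
  · rw [cyc_snd, cyc_trd hiq hpq, cyc_other hij hip hiq, cyc_fst hip hpq]
  rcases eq_or_ne w q with rfl | hwq
  · rw [cyc_trd hjq hpq, cyc_other hij.symm hjp hjq, cyc_fst hjp hpq, cyc_snd]
  · rw [cyc_other hwj hwp hwq, cyc_other hwi hwp hwq, cyc_other hwj hwp hwq,
      cyc_other hwi hwp hwq]

lemma swap_chain {a p q : α} (hap : a ≠ p) (haq : a ≠ q) (hpq : p ≠ q) :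
    Equiv.swap a p * Equiv.swap p q = cyc a p q := by
  ext w
  simp only [Equiv.Perm.mul_apply]
  rcases eq_or_ne w a with rfl | hwa
  · rw [Equiv.swap_apply_of_ne_of_ne hap haq, Equiv.swap_apply_left, cyc_fst hap hpq]
  rcases eq_or_ne w p with rfl | hwp
  · rw [Equiv.swap_apply_left, Equiv.swap_apply_of_ne_of_ne haq.symm hpq.symm, cyc_snd]
  rcases eq_or_ne w q with rfl | hwq
  · rw [Equiv.swap_apply_right, Equiv.swap_apply_right, cyc_trd haq hpq]
  · rw [Equiv.swap_apply_of_ne_of_ne hwp hwq, Equiv.swap_apply_of_ne_of_ne hwa hwp,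
      cyc_other hwa hwp hwq]

lemma isThreeCycle_eq_cyc [Fintype α] {σ : Equiv.Perm α} (h : σ.IsThreeCycle) :
    ∃ x y z : α, x ≠ y ∧ x ≠ z ∧ y ≠ z ∧ σ = cyc x y z := by
  have hcard := h.card_support
  obtain ⟨x, hx⟩ : σ.support.Nonempty := Finset.card_pos.mp (by omega)
  have hx' : σ x ≠ x := Equiv.Perm.mem_support.mp hx
  have h3 : σ ^ 3 = 1 := by rw [← h.orderOf]; exact pow_orderOf_eq_one σ
  have hiter : σ (σ (σ x)) = x := by
    have h4 : (σ ^ 3) x = x := by rw [h3]; rfl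
    simpa [pow_succ, Equiv.Perm.mul_apply] using h4
  have d1 : x ≠ σ x := hx'.symm
  have memy : σ x ∈ σ.support := Equiv.Perm.apply_mem_support.mpr hx
  have d2 : σ x ≠ σ (σ x) := (Equiv.Perm.mem_support.mp memy).symm
  have d3 : x ≠ σ (σ x) := by
    intro hxz
    have h5 := congrArg σ hxz
    rw [hiter] at h5
    exact hx' h5
  have hsub : ({x, σ x, σ (σ x)} : Finset α) ⊆ σ.support := by
    intro w hw
    simp only [Finset.mem_insert, Finset.mem_singleton] at hw
    rcases hw with rfl | rfl | rfl
    · exact hx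
    · exact memy
    · exact Equiv.Perm.apply_mem_support.mpr memy
  have hsupp : ({x, σ x, σ (σ x)} : Finset α) = σ.support := by
    refine Finset.eq_of_subset_of_card_le hsub ?_
    rw [hcard]
    rw [Finset.card_insert_of_notMem (by simp [d1, d3]),
      Finset.card_insert_of_notMem (by simp [d2]), Finset.card_singleton]
  refine ⟨x, σ x, σ (σ x), d1, d3, d2, ?_⟩
  ext w
  rcases eq_or_ne w x with rfl | hwx
  · rw [cyc_fst d1 d2]
  rcases eq_or_ne w (σ x) with rfl | hwy
  · rw [cyc_snd]
  rcases eq_or_ne w (σ (σ x)) with rfl | hwz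
  · rw [cyc_trd d3 d2, hiter]
  · rw [cyc_other hwx hwy hwz]
    have : w ∉ σ.support := by
      rw [← hsupp]
      simp [hwx, hwy, hwz]
    exact Equiv.Perm.notMem_support.mp this



/-! group identities -/
section Identities
variable {Γ : Type*} [Group Γ] (x y z : Γ)

lemma sq_eq_inv {x : Γ} (h : x ^ 3 = 1) : x * x = x⁻¹ :=
  eq_inv_of_mul_eq_one_left (by rw [← h, pow_succ, pow_two])

lemma self_inv {z : Γ} (h : z ^ 2 = 1) : z⁻¹ = z :=
  inv_eq_of_mul_eq_one_right (by rw [← h, pow_two])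

lemma swap_of_sq {x y : Γ} (h : (x * y) ^ 2 = 1) : x * y = y⁻¹ * x⁻¹ := by
  have h1 : (x * y)⁻¹ = x * y := self_inv h
  rw [← h1, mul_inv_rev]

lemma inv_of_sq {x y : Γ} (h : (x * y) ^ 2 = 1) : y⁻¹ * x⁻¹ = x * y := (swap_of_sq h).symm

lemma inv_mul_inv_self {x : Γ} (h : x ^ 3 = 1) : x⁻¹ * x⁻¹ = x := by
  have h1 : x⁻¹ * x⁻¹ = (x * x)⁻¹ := by group
  rw [h1, sq_eq_inv h, inv_inv]

lemma id7 {x y : Γ} (hx : x ^ 3 = 1) (hy : y ^ 3 = 1) (hxy : (x * y) ^ 2 = 1)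
    (hyx : (y * x) ^ 2 = 1) : x⁻¹ * y * x = y⁻¹ * (x⁻¹ * y) := by
  have lhs : x⁻¹ * y * x = x * y⁻¹ := by
    calc x⁻¹ * y * x = x⁻¹ * (y * x) := by group
    _ = x⁻¹ * (x⁻¹ * y⁻¹) := by rw [swap_of_sq hyx]
    _ = (x⁻¹ * x⁻¹) * y⁻¹ := by group
    _ = x * y⁻¹ := by rw [inv_mul_inv_self hx]
  have rhs : y⁻¹ * (x⁻¹ * y) = x * y⁻¹ := by
    calc y⁻¹ * (x⁻¹ * y) = (y⁻¹ * x⁻¹) * y := by group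
    _ = (x * y) * y := by rw [inv_of_sq hxy]
    _ = x * (y * y) := by group
    _ = x * y⁻¹ := by rw [sq_eq_inv hy]
  rw [lhs, rhs]

lemma id8 {x y : Γ} (hy : y ^ 3 = 1) (hyx : (y * x) ^ 2 = 1) : x⁻¹ * y * y = y * x := by
  calc x⁻¹ * y * y = x⁻¹ * (y * y) := by group
  _ = x⁻¹ * y⁻¹ := by rw [sq_eq_inv hy]
  _ = (y * x)⁻¹ := by group
  _ = y * x := self_inv hyx

lemma id9 {x y z : Γ} (hz : z ^ 3 = 1) (hxz : (x * z) ^ 2 = 1) (hyx : (y * x) ^ 2 = 1)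
    (hzy : (z * y) ^ 2 = 1) : x⁻¹ * z * y = y * z⁻¹ * (x⁻¹ * z) := by
  have lhs : x⁻¹ * z * y = y * x * z⁻¹ := by
    calc x⁻¹ * z * y = x⁻¹ * (z * y) := by group
    _ = x⁻¹ * (y⁻¹ * z⁻¹) := by rw [swap_of_sq hzy]
    _ = (x⁻¹ * y⁻¹) * z⁻¹ := by group
    _ = (y * x)⁻¹ * z⁻¹ := by group
    _ = (y * x) * z⁻¹ := by rw [self_inv hyx]
  have rhs : y * z⁻¹ * (x⁻¹ * z) = y * x * z⁻¹ := by
    calc y * z⁻¹ * (x⁻¹ * z) = y * ((z⁻¹ * x⁻¹) * z) := by group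
    _ = y * ((x * z) * z) := by rw [inv_of_sq hxz]
    _ = y * (x * (z * z)) := by group
    _ = y * (x * z⁻¹) := by rw [sq_eq_inv hz]
    _ = y * x * z⁻¹ := by group
  rw [lhs, rhs]

end Identities

/-! the presented group -/

def rels (m : ℕ) : Set (FreeGroup (Fin m)) :=
  {w : FreeGroup (Fin m) | ∃ i, w = (FreeGroup.of i) ^ 3} ∪
    {w : FreeGroup (Fin m) | ∃ i j, i ≠ j ∧ w = (FreeGroup.of i * FreeGroup.of j) ^ 2}

abbrev G (m : ℕ) := PresentedGroup (rels m)

lemma mk_rel {m : ℕ} {w : FreeGroup (Fin m)} (hw : w ∈ rels m) :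
    PresentedGroup.mk (rels m) w = 1 :=
  (QuotientGroup.eq_one_iff _).mpr (Subgroup.subset_normalClosure hw)

lemma of_cube {m : ℕ} (i : Fin m) : (PresentedGroup.of (rels := rels m) i) ^ 3 = 1 := by
  have h := mk_rel (m := m) (Or.inl ⟨i, rfl⟩)
  rw [map_pow] at h
  exact h

lemma of_pair {m : ℕ} {i j : Fin m} (h : i ≠ j) :
    ((PresentedGroup.of (rels := rels m) i) * PresentedGroup.of j) ^ 2 = 1 := by
  have h2 := mk_rel (m := m) (Or.inr ⟨i, j, h, rfl⟩)
  rw [map_pow, map_mul] at h2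
  exact h2

/-! the concrete permutations -/

def P (m : ℕ) : Fin (m + 2) := ⟨m, by simp⟩
def Q (m : ℕ) : Fin (m + 2) := ⟨m + 1, by simp⟩

def fσ (m : ℕ) (i : Fin m) : Equiv.Perm (Fin (m + 2)) :=
  Equiv.swap (Fin.castLE (by simp) i) (P m) * Equiv.swap (P m) (Q m)

variable {m : ℕ}

lemma castLE_ne_P (i : Fin m) : (Fin.castLE (by simp : m ≤ m + 2) i) ≠ P m := by
  simp only [Ne, Fin.ext_iff, Fin.coe_castLE, P]
  omega

lemma castLE_ne_Q (i : Fin m) : (Fin.castLE (by simp : m ≤ m + 2) i) ≠ Q m := by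
  simp only [Ne, Fin.ext_iff, Fin.coe_castLE, Q]
  omega

lemma P_ne_Q : P m ≠ Q m := by simp [P, Q, Fin.ext_iff]

lemma fσ_eq_cyc (i : Fin m) : fσ m i = cyc (Fin.castLE (by simp) i) (P m) (Q m) :=
  swap_chain (castLE_ne_P i) (castLE_ne_Q i) P_ne_Q

lemma fσ_mem_alternating (i : Fin m) : fσ m i ∈ alternatingGroup (Fin (m + 2)) := by
  rw [Equiv.Perm.mem_alternatingGroup, fσ_eq_cyc]
  exact (cyc_isThreeCycle (castLE_ne_P i) (castLE_ne_Q i) P_ne_Q).sign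

def σalt (m : ℕ) (i : Fin m) : alternatingGroup (Fin (m + 2)) := ⟨fσ m i, fσ_mem_alternating i⟩

lemma lift_rels (m : ℕ) : ∀ r ∈ rels m, FreeGroup.lift (σalt m) r = 1 := by
  rintro r (⟨i, rfl⟩ | ⟨i, j, hij, rfl⟩)
  · rw [map_pow, FreeGroup.lift_apply_of]
    refine Subtype.ext ?_
    push_cast [σalt]
    rw [fσ_eq_cyc]
    exact cyc_cube (castLE_ne_P i) (castLE_ne_Q i) P_ne_Q
  · rw [map_pow, map_mul, FreeGroup.lift_apply_of, FreeGroup.lift_apply_of]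
    refine Subtype.ext ?_
    push_cast [σalt]
    rw [fσ_eq_cyc, fσ_eq_cyc]
    exact cyc_pair_sq (fun h => hij (Fin.castLE_injective _ h)) (castLE_ne_P i) (castLE_ne_Q i)
      (castLE_ne_P j) (castLE_ne_Q j) P_ne_Q

def φ (m : ℕ) : G m →* alternatingGroup (Fin (m + 2)) := PresentedGroup.toGroup (lift_rels m)

@[simp] lemma φ_of (i : Fin m) : φ m (PresentedGroup.of i) = σalt m i :=
  PresentedGroup.toGroup.of _


section Surj

variable {m : ℕ}

local notation "D" => Subgroup.closure (Set.range (fσ m))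

lemma cyc_rotate2 {β : Type*} [DecidableEq β] {x y z : β} (hxy : x ≠ y) (hxz : x ≠ z)
    (hyz : y ≠ z) : cyc x y z = cyc z x y :=
  (cyc_rotate hxy hxz hyz).trans (cyc_rotate hyz hxy.symm hxz.symm)

lemma lower {u : Fin (m + 2)} (hp : u ≠ P m) (hq : u ≠ Q m) :
    ∃ i : Fin m, Fin.castLE (by simp) i = u := by
  have h1 : (u : ℕ) ≠ m := fun h => hp (Fin.ext h)
  have h2 : (u : ℕ) ≠ m + 1 := fun h => hq (Fin.ext h)
  have h3 : (u : ℕ) < m := by omega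
  exact ⟨⟨u, h3⟩, Fin.ext rfl⟩

lemma mem0 {u : Fin (m + 2)} (hp : u ≠ P m) (hq : u ≠ Q m) : cyc u (P m) (Q m) ∈ D := by
  obtain ⟨i, rfl⟩ := lower hp hq
  exact Subgroup.subset_closure ⟨i, fσ_eq_cyc i⟩

lemma mem0' {u : Fin (m + 2)} (hp : u ≠ P m) (hq : u ≠ Q m) : cyc u (Q m) (P m) ∈ D := by
  rw [show cyc u (Q m) (P m) = (cyc u (P m) (Q m))⁻¹ from cyc_inv.symm]
  exact inv_mem (mem0 hp hq)

lemma mem1q {u v : Fin (m + 2)} (hup : u ≠ P m) (huq : u ≠ Q m) (hvp : v ≠ P m)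
    (hvq : v ≠ Q m) (huv : u ≠ v) : cyc u v (Q m) ∈ D := by
  have hg : cyc u (P m) (Q m) * cyc v (P m) (Q m) * (cyc u (P m) (Q m))⁻¹ =
      cyc v (Q m) u := by
    rw [cyc_conj, cyc_other huv.symm hvp hvq, cyc_snd, cyc_trd huq P_ne_Q]
  rw [cyc_rotate huv huq hvq, ← hg]
  exact mul_mem (mul_mem (mem0 hup huq) (mem0 hvp hvq)) (inv_mem (mem0 hup huq))

lemma mem1p {u v : Fin (m + 2)} (hup : u ≠ P m) (huq : u ≠ Q m) (hvp : v ≠ P m)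
    (hvq : v ≠ Q m) (huv : u ≠ v) : cyc u v (P m) ∈ D := by
  have hg : cyc v (Q m) (P m) * cyc u (P m) (Q m) * (cyc v (Q m) (P m))⁻¹ =
      cyc u v (P m) := by
    rw [cyc_conj, cyc_other huv huq hup, cyc_trd hvp P_ne_Q.symm, cyc_snd]
  rw [← hg]
  exact mul_mem (mul_mem (mem0' hvp hvq) (mem0 hup huq)) (inv_mem (mem0' hvp hvq))

lemma mem2 {u v w : Fin (m + 2)} (hup : u ≠ P m) (huq : u ≠ Q m) (hvp : v ≠ P m)
    (hvq : v ≠ Q m) (hwp : w ≠ P m) (hwq : w ≠ Q m) (huv : u ≠ v) (huw : u ≠ w)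
    (hvw : v ≠ w) : cyc u v w ∈ D := by
  have hg : cyc w (P m) (Q m) * cyc u v (Q m) * (cyc w (P m) (Q m))⁻¹ = cyc u v w := by
    rw [cyc_conj, cyc_other huw hup huq, cyc_other hvw hvp hvq, cyc_trd hwq P_ne_Q]
  rw [← hg]
  exact mul_mem (mul_mem (mem0 hwp hwq) (mem1q hup huq hvp hvq huv)) (inv_mem (mem0 hwp hwq))

lemma cyc_mem {x y z : Fin (m + 2)} (hxy : x ≠ y) (hxz : x ≠ z) (hyz : y ≠ z) :
    cyc x y z ∈ D := by
  rcases eq_or_ne z (P m) with rfl | hzP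
  · rcases eq_or_ne x (Q m) with rfl | hxQ
    · rw [cyc_rotate hxy hxz hyz]
      exact mem0 hyz hxy.symm
    · rcases eq_or_ne y (Q m) with rfl | hyQ
      · exact mem0' hxz hxy
      · exact mem1p hxz hxQ hyz hyQ hxy
  rcases eq_or_ne z (Q m) with rfl | hzQ
  · rcases eq_or_ne x (P m) with rfl | hxP
    · rw [cyc_rotate hxy hxz hyz]
      exact mem0' hxy.symm hyz
    · rcases eq_or_ne y (P m) with rfl | hyP
      · exact mem0 hxP hxz
      · exact mem1q hxP hxz hyP hyz hxy
  · rcases eq_or_ne x (P m) with rfl | hxP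
    · rcases eq_or_ne y (Q m) with rfl | hyQ
      · rw [cyc_rotate2 hxy hxz hyz]
        exact mem0 hzP hzQ
      · rw [cyc_rotate hxy hxz hyz]
        exact mem1p hxy.symm hyQ hzP hzQ hyz
    · rcases eq_or_ne x (Q m) with rfl | hxQ
      · rcases eq_or_ne y (P m) with rfl | hyP
        · rw [cyc_rotate2 hxy hxz hyz]
          exact mem0' hzP hzQ
        · rw [cyc_rotate hxy hxz hyz]
          exact mem1q hyP hxy.symm hzP hzQ hyz
      · rcases eq_or_ne y (P m) with rfl | hyP
        · rw [cyc_rotate2 hxy hxz hyz]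
          exact mem1p hzP hzQ hxP hxQ hxz.symm
        · rcases eq_or_ne y (Q m) with rfl | hyQ
          · rw [cyc_rotate2 hxy hxz hyz]
            exact mem1q hzP hzQ hxP hxQ hxz.symm
          · exact mem2 hxP hxQ hyP hyQ hzP hzQ hxy hxz hyz

lemma alt_le_D : alternatingGroup (Fin (m + 2)) ≤ D := by
  rw [← Equiv.Perm.closure_three_cycles_eq_alternating]
  refine (Subgroup.closure_le _).mpr ?_
  rintro f hf
  obtain ⟨x, y, z, hxy, hxz, hyz, rfl⟩ := isThreeCycle_eq_cyc hf
  exact cyc_mem hxy hxz hyz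

lemma φ_surjective : Function.Surjective (φ m) := by
  intro g
  set φ' : G m →* Equiv.Perm (Fin (m + 2)) :=
    (alternatingGroup (Fin (m + 2))).subtype.comp (φ m) with hφ'
  have hrange : φ'.range = D := by
    rw [MonoidHom.range_eq_map, ← PresentedGroup.closure_range_of (rels m),
      MonoidHom.map_closure]
    have hof : ∀ i : Fin m, φ' (PresentedGroup.of i) = fσ m i := fun i => by
      simp [hφ', φ_of, σalt]
    congr 1
    ext f
    constructor
    · rintro ⟨-, ⟨i, rfl⟩, rfl⟩
      exact ⟨i, (hof i).symm⟩
    · rintro ⟨i, rfl⟩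
      exact ⟨PresentedGroup.of i, ⟨i, rfl⟩, hof i⟩
  have hmem : (g : Equiv.Perm (Fin (m + 2))) ∈ φ'.range := by
    rw [hrange]
    exact alt_le_D g.2
  obtain ⟨x, hx⟩ := hmem
  exact ⟨x, Subtype.ext hx⟩

end Surj

section Count

lemma card_bound : ∀ m : ℕ, Finite (G m) ∧ Nat.card (G m) * 2 ≤ (m + 2).factorial := by
  intro m
  induction m with
  | zero =>
    have hfree : ∀ w : FreeGroup (Fin 0), w = 1 := fun w =>
      FreeGroup.induction_on (C := fun w => w = 1) w rfl (fun i => i.elim0) (fun i _ => i.elim0)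
        (fun a b ha hb => by rw [ha, hb, mul_one])
    have hall : ∀ g : G 0, g = 1 := by
      intro g
      induction g using PresentedGroup.induction_on with
      | _ w => rw [hfree w, map_one]
    have hsurj : Function.Surjective (fun _ : Unit => (1 : G 0)) := fun g => ⟨(), (hall g).symm⟩
    refine ⟨Finite.of_surjective _ hsurj, ?_⟩
    have hle := Nat.card_le_card_of_surjective _ hsurj
    have h1 : Nat.card Unit = 1 := Nat.card_unique
    rw [h1] at hle
    have : (0 + 2).factorial = 2 := by decide
    omega
  | succ m ih =>
    obtain ⟨hfinm, hcardm⟩ := ih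
    have hψrel : ∀ r ∈ rels m, FreeGroup.lift
        (fun i : Fin m => (PresentedGroup.of (rels := rels (m + 1)) i.castSucc)) r = 1 := by
      rintro r (⟨i, rfl⟩ | ⟨i, j, hij, rfl⟩)
      · rw [map_pow, FreeGroup.lift_apply_of]; exact of_cube _
      · rw [map_pow, map_mul, FreeGroup.lift_apply_of, FreeGroup.lift_apply_of]
        exact of_pair fun h => hij (Fin.castSucc_injective _ h)
    set ψ : G m →* G (m + 1) := PresentedGroup.toGroup hψrel with hψ
    set H : Subgroup (G (m + 1)) := ψ.range with hHdef
    haveI hfinm' : Finite (G m) := hfinm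
    haveI hfinH : Finite H := Finite.of_surjective _ ψ.rangeRestrict_surjective
    have hcardH : Nat.card H ≤ Nat.card (G m) :=
      Nat.card_le_card_of_surjective _ ψ.rangeRestrict_surjective
    have hgen : ∀ i : Fin m, (PresentedGroup.of i.castSucc : G (m + 1)) ∈ H := fun i =>
      ⟨PresentedGroup.of i, PresentedGroup.toGroup.of hψrel⟩
    set a : G (m + 1) := PresentedGroup.of (Fin.last m) with ha
    set Pr : G (m + 1) → Prop := fun u =>
      (∃ h ∈ H, u = h) ∨ (∃ h ∈ H, u = h * a) ∨ (∃ h ∈ H, u = h * a⁻¹) ∨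
        (∃ h ∈ H, ∃ i : Fin m, u = h * (a⁻¹ * PresentedGroup.of i.castSucc)) with hPr
    have hne : ∀ i : Fin m, Fin.castSucc i ≠ Fin.last m := fun i => (Fin.castSucc_lt_last i).ne
    have step : ∀ u, Pr u → ∀ s : Fin (m + 1), Pr (u * PresentedGroup.of s) := by
      intro u hu s
      induction s using Fin.lastCases with
      | last =>
        rcases hu with ⟨h, hh, rfl⟩ | ⟨h, hh, rfl⟩ | ⟨h, hh, rfl⟩ | ⟨h, hh, i, rfl⟩
        · exact Or.inr (Or.inl ⟨u, hh, rfl⟩)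
        · refine Or.inr (Or.inr (Or.inl ⟨h, hh, ?_⟩))
          rw [mul_assoc, sq_eq_inv (of_cube _)]
        · exact Or.inl ⟨h, hh, by rw [mul_assoc, inv_mul_cancel, mul_one]⟩
        · refine Or.inr (Or.inr (Or.inr ⟨h * (PresentedGroup.of i.castSucc)⁻¹,
            mul_mem hh (inv_mem (hgen i)), i, ?_⟩))
          have h7 : a⁻¹ * PresentedGroup.of i.castSucc * a =
              (PresentedGroup.of i.castSucc)⁻¹ * (a⁻¹ * PresentedGroup.of i.castSucc) :=
            id7 (of_cube _) (of_cube _) (of_pair (hne i).symm) (of_pair (hne i))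
          calc h * (a⁻¹ * PresentedGroup.of i.castSucc) * a
              = h * (a⁻¹ * PresentedGroup.of i.castSucc * a) := by group
          _ = h * ((PresentedGroup.of i.castSucc)⁻¹ * (a⁻¹ * PresentedGroup.of i.castSucc)) := by
              rw [h7]
          _ = h * (PresentedGroup.of i.castSucc)⁻¹ * (a⁻¹ * PresentedGroup.of i.castSucc) := by
              group
      | cast j =>
        rcases hu with ⟨h, hh, rfl⟩ | ⟨h, hh, rfl⟩ | ⟨h, hh, rfl⟩ | ⟨h, hh, i, rfl⟩
        · exact Or.inl ⟨u * PresentedGroup.of j.castSucc, mul_mem hh (hgen j), rfl⟩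
        · refine Or.inr (Or.inr (Or.inl ⟨h * (PresentedGroup.of j.castSucc)⁻¹,
            mul_mem hh (inv_mem (hgen j)), ?_⟩))
          have hs : a * PresentedGroup.of j.castSucc =
              (PresentedGroup.of j.castSucc)⁻¹ * a⁻¹ := swap_of_sq (of_pair (hne j).symm)
          calc h * a * PresentedGroup.of j.castSucc
              = h * (a * PresentedGroup.of j.castSucc) := by group
          _ = h * ((PresentedGroup.of j.castSucc)⁻¹ * a⁻¹) := by rw [hs]
          _ = h * (PresentedGroup.of j.castSucc)⁻¹ * a⁻¹ := by group
        · exact Or.inr (Or.inr (Or.inr ⟨h, hh, j, by rw [mul_assoc]⟩))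
        · by_cases hij : i = j
          · subst hij
            refine Or.inr (Or.inl ⟨h * PresentedGroup.of i.castSucc,
              mul_mem hh (hgen i), ?_⟩)
            have h8 : a⁻¹ * PresentedGroup.of i.castSucc * PresentedGroup.of i.castSucc =
                PresentedGroup.of i.castSucc * a := id8 (of_cube _) (of_pair (hne i))
            calc h * (a⁻¹ * PresentedGroup.of i.castSucc) * PresentedGroup.of i.castSucc
                = h * (a⁻¹ * PresentedGroup.of i.castSucc * PresentedGroup.of i.castSucc) := by
                  group
            _ = h * (PresentedGroup.of i.castSucc * a) := by rw [h8]
            _ = h * PresentedGroup.of i.castSucc * a := by group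
          · refine Or.inr (Or.inr (Or.inr ⟨h * (PresentedGroup.of j.castSucc *
              (PresentedGroup.of i.castSucc)⁻¹),
              mul_mem hh (mul_mem (hgen j) (inv_mem (hgen i))), i, ?_⟩))
            have h9 : a⁻¹ * PresentedGroup.of i.castSucc * PresentedGroup.of j.castSucc =
                PresentedGroup.of j.castSucc * (PresentedGroup.of i.castSucc)⁻¹ *
                  (a⁻¹ * PresentedGroup.of i.castSucc) :=
              id9 (of_cube _) (of_pair (hne i).symm) (of_pair (hne j))
                (of_pair fun h => hij (Fin.castSucc_injective _ h))
            calc h * (a⁻¹ * PresentedGroup.of i.castSucc) * PresentedGroup.of j.castSucc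
                = h * (a⁻¹ * PresentedGroup.of i.castSucc * PresentedGroup.of j.castSucc) := by
                  group
            _ = h * (PresentedGroup.of j.castSucc * (PresentedGroup.of i.castSucc)⁻¹ *
                  (a⁻¹ * PresentedGroup.of i.castSucc)) := by rw [h9]
            _ = h * (PresentedGroup.of j.castSucc * (PresentedGroup.of i.castSucc)⁻¹) *
                  (a⁻¹ * PresentedGroup.of i.castSucc) := by group
    set K : Subgroup (G (m + 1)) :=
      { carrier := {g | ∀ u, Pr u → Pr (u * g) ∧ Pr (u * g⁻¹)}
        one_mem' := by
          intro u hu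
          simp only [inv_one, mul_one]
          exact ⟨hu, hu⟩
        mul_mem' := by
          intro g₁ g₂ h1 h2 u hu
          constructor
          · rw [← mul_assoc]
            exact (h2 _ ((h1 u hu).1)).1
          · rw [mul_inv_rev, ← mul_assoc]
            exact (h1 _ ((h2 u hu).2)).2
        inv_mem' := by
          intro g hg u hu
          refine ⟨(hg u hu).2, ?_⟩
          rw [inv_inv]
          exact (hg u hu).1 } with hK
    have hKtop : ∀ g : G (m + 1), g ∈ K := by
      have hle : Subgroup.closure (Set.range (PresentedGroup.of : Fin (m + 1) → G (m + 1)))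
          ≤ K := by
        rw [Subgroup.closure_le]
        rintro g ⟨s, rfl⟩
        intro u hu
        refine ⟨step u hu s, ?_⟩
        have hinv : (PresentedGroup.of s : G (m + 1))⁻¹ =
            PresentedGroup.of s * PresentedGroup.of s := (sq_eq_inv (of_cube s)).symm
        rw [hinv, ← mul_assoc]
        exact step _ (step u hu s) s
      rw [PresentedGroup.closure_range_of] at hle
      exact fun g => hle (Subgroup.mem_top g)
    have Pall : ∀ g : G (m + 1), Pr g := by
      intro g
      have h1 : Pr 1 := Or.inl ⟨1, one_mem H, rfl⟩
      have h2 := (hKtop g 1 h1).1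
      rwa [one_mul] at h2
    set r : Fin (m + 3) → G (m + 1) := fun k =>
      if hk : (k : ℕ) < m then a⁻¹ * PresentedGroup.of (Fin.castSucc ⟨k, hk⟩)
      else if (k : ℕ) = m then 1 else if (k : ℕ) = m + 1 then a else a⁻¹ with hr
    set F : H × Fin (m + 3) → G (m + 1) := fun x => (x.1 : G (m + 1)) * r x.2 with hF
    have hFsurj : Function.Surjective F := by
      intro g
      rcases Pall g with ⟨h, hh, rfl⟩ | ⟨h, hh, rfl⟩ | ⟨h, hh, rfl⟩ | ⟨h, hh, i, rfl⟩
      · refine ⟨⟨⟨g, hh⟩, ⟨m, by omega⟩⟩, ?_⟩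
        simp [hF, hr]
      · refine ⟨⟨⟨h, hh⟩, ⟨m + 1, by omega⟩⟩, ?_⟩
        simp [hF, hr]
      · refine ⟨⟨⟨h, hh⟩, ⟨m + 2, by omega⟩⟩, ?_⟩
        simp [hF, hr]
      · refine ⟨⟨⟨h, hh⟩, ⟨(i : ℕ), by omega⟩⟩, ?_⟩
        have hlt : ((⟨(i : ℕ), by omega⟩ : Fin (m + 3)) : ℕ) < m := i.isLt
        simp only [hF, hr, dif_pos hlt]
    haveI hfinG : Finite (G (m + 1)) := Finite.of_surjective F hFsurj
    refine ⟨hfinG, ?_⟩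
    have hcard1 : Nat.card (G (m + 1)) ≤ Nat.card (H × Fin (m + 3)) :=
      Nat.card_le_card_of_surjective F hFsurj
    rw [Nat.card_prod] at hcard1
    have hfin3 : Nat.card (Fin (m + 3)) = m + 3 := by
      rw [Nat.card_eq_fintype_card, Fintype.card_fin]
    rw [hfin3] at hcard1
    have hfact : (m + 1 + 2).factorial = (m + 3) * (m + 2).factorial := by
      rw [show m + 1 + 2 = (m + 2) + 1 by omega, Nat.factorial_succ]
    rw [hfact]
    calc Nat.card (G (m + 1)) * 2 ≤ (Nat.card H * (m + 3)) * 2 :=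
          Nat.mul_le_mul_right 2 hcard1
    _ = (m + 3) * (Nat.card H * 2) := by ring
    _ ≤ (m + 3) * (Nat.card (G m) * 2) := by
          exact Nat.mul_le_mul_left _ (Nat.mul_le_mul_right _ hcardH)
    _ ≤ (m + 3) * (m + 2).factorial := Nat.mul_le_mul_left _ hcardm

end Count

end AltPres

/-- The alternating group `Alt(n+2)` has the presentation
`⟨x_1, …, x_n ∣ x_i³, (x_i x_j)² (i ≠ j)⟩`, where `x_i` is realized as the
3-cycle `(i, n+1, n+2)`. -/
theorem alternating_presentation (n : ℕ) (hn : 1 ≤ n) :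
    ∃ e : PresentedGroup
        ({w : FreeGroup (Fin n) | ∃ i, w = (FreeGroup.of i) ^ 3} ∪
          {w : FreeGroup (Fin n) | ∃ i j, i ≠ j ∧
            w = (FreeGroup.of i * FreeGroup.of j) ^ 2})
        ≃* alternatingGroup (Fin (n + 2)),
      ∀ i : Fin n,
        (e (PresentedGroup.of i) : Equiv.Perm (Fin (n + 2)))
          = Equiv.swap (Fin.castLE (by omega) i) ⟨n, by omega⟩
              * Equiv.swap ⟨n, by omega⟩ ⟨n + 1, by omega⟩ := by
  classical
  obtain ⟨hfin, hcard⟩ := AltPres.card_bound n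
  haveI := hfin
  have hsurj := AltPres.φ_surjective (m := n)
  have hcardAlt : 2 * Fintype.card (alternatingGroup (Fin (n + 2))) =
      (Fintype.card (Fin (n + 2))).factorial := by
    rw [two_mul_card_alternatingGroup, Fintype.card_perm]
  have h1 : Nat.card (alternatingGroup (Fin (n + 2))) =
      Fintype.card (alternatingGroup (Fin (n + 2))) := Nat.card_eq_fintype_card
  have hle : Nat.card (AltPres.G n) ≤ Nat.card (alternatingGroup (Fin (n + 2))) := by
    rw [h1]
    rw [Fintype.card_fin] at hcardAlt
    omega
  have hbij : Function.Bijective (AltPres.φ n) := hsurj.bijective_of_nat_card_le hle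
  refine ⟨MulEquiv.ofBijective _ hbij, fun i => ?_⟩
  show ((AltPres.φ n) (PresentedGroup.of i) : Equiv.Perm (Fin (n + 2))) = _
  rw [AltPres.φ_of]
  rfl
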